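/- Every point in the polytope {x : Pᵢx ≤ qᵢ - r‖Pᵢ‖ ∀i} has Euclidean distance at least r to the complement of the polytope {x : Px ≤ q}, assuming each row Pᵢ is nonzero. -/

import Mathlib

/-- every point of the shrunk polytope `{x | Pᵢx ≤ qᵢ - r‖Pᵢ‖}` is at
Euclidean distance at least `r` from every point of the complement of `{x | Px ≤ q}`,
assuming each row `Pᵢ` is nonzero. -/
theorem stmt_1 (n m : ℕ) (P : Fin m → EuclideanSpace ℝ (Fin n)) (q : Fin m → ℝ)
    (r : ℝ) (hr : 0 ≤ r) (hP : ∀ i, P i ≠ 0)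
    (x : EuclideanSpace ℝ (Fin n)) (hx : ∀ i, (inner ℝ (P i) x : ℝ) ≤ q i - r * ‖P i‖)
    (y : EuclideanSpace ℝ (Fin n)) (hy : ¬ (∀ i, (inner ℝ (P i) y : ℝ) ≤ q i)) :
    r ≤ ‖x - y‖ := by
  push_neg at hy
  obtain ⟨i, hi⟩ := hy
  have hPi : (0:ℝ) < ‖P i‖ := norm_pos_iff.mpr (hP i)
  have h1 : r * ‖P i‖ ≤ inner ℝ (P i) (y - x) := by
    rw [inner_sub_right]
    have := hx i
    linarith
  have h2 : (inner ℝ (P i) (y - x) : ℝ) ≤ ‖P i‖ * ‖y - x‖ :=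
    real_inner_le_norm _ _
  rw [← norm_neg, neg_sub]
  nlinarith
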